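/- In the setting of the two-column estimate: if c is an operator from ℂ² to ℓ² given by a matrix with two columns, the first being v ∈ ℓ² and the second having exactly one nonzero entry w in some row j > 1, and if ‖c‖ = ‖v‖₂, then v̄_j · w = 0, i.e. w = 0 (since v_j ≠ 0). -/

import Mathlib

lemma stmt10_aux (b : ℂ) :
    ‖((WithLp.equiv 2 (Fin 2 → ℂ)).symm ![1, b] : EuclideanSpace ℂ (Fin 2))‖ ^ 2
      = 1 + ‖b‖ ^ 2 := by
  rw [EuclideanSpace.norm_eq, Real.sq_sqrt (by positivity)]
  simp [Fin.sum_univ_two]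

set_option maxHeartbeats 1000000 in
theorem stmt10 (v : ℕ → ℂ) (hv : Memℓp v 2) (hvj : ∀ k, v k ≠ 0)
    (j : ℕ) (hj : j ≠ 0) (w : ℂ)
    (c : EuclideanSpace ℂ (Fin 2) →L[ℂ] lp (fun _ : ℕ => ℂ) 2)
    (hc : ∀ (ζ : EuclideanSpace ℂ (Fin 2)) (k : ℕ),
      (c ζ : ∀ _ : ℕ, ℂ) k = v k * ζ 0 + (if k = j then w * ζ 1 else 0))
    (hnorm : ‖c‖ = ‖(⟨v, hv⟩ : lp (fun _ : ℕ => ℂ) 2)‖) :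
    w = 0 := by
  by_contra hw
  set V : lp (fun _ : ℕ => ℂ) 2 := ⟨v, hv⟩ with hVdef
  have hVnorm : ‖V‖ ^ 2 = ∑' k, ‖v k‖ ^ 2 := by
    have h := lp.norm_rpow_eq_tsum (p := 2) (by norm_num) V
    simpa [ENNReal.toReal_ofNat, Real.rpow_natCast] using h
  have hsummable : Summable fun k => ‖v k‖ ^ 2 := by
    have h := hv.summable (p := 2) (by norm_num)
    simpa [ENNReal.toReal_ofNat, Real.rpow_natCast] using h
  have hNpos : (0:ℝ) < ‖V‖ := by
    rw [norm_pos_iff]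
    intro h
    apply hvj 0
    have : (V : ∀ _ : ℕ, ℂ) 0 = 0 := by rw [h]; rfl
    exact this
  set N : ℝ := ‖V‖ ^ 2 with hNdef
  have hN2 : 0 < N := by positivity
  have hwpos : (0:ℝ) < ‖w‖ := norm_pos_iff.2 hw
  set t : ℝ := ‖w‖ ^ 2 / N with htdef
  have ht : 0 < t := by positivity
  set b : ℂ := (t : ℂ) * v j / w with hbdef
  have hwb : w * b = (t : ℂ) * v j := by
    rw [hbdef]; field_simp
  set ζ : EuclideanSpace ℂ (Fin 2) := (WithLp.equiv 2 (Fin 2 → ℂ)).symm ![1, b] with hζdef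
  have hζ0 : ζ 0 = 1 := rfl
  have hζ1 : ζ 1 = b := rfl
  have hζnorm : ‖ζ‖ ^ 2 = 1 + ‖b‖ ^ 2 := by
    rw [hζdef]; exact stmt10_aux b
  set D : ℝ := (2 * t + t ^ 2) * ‖v j‖ ^ 2 with hDdef
  have hentry : ∀ k, ‖(c ζ : ∀ _ : ℕ, ℂ) k‖ ^ 2
      = ‖v k‖ ^ 2 + (if k = j then D else 0) := by
    intro k
    rw [hc ζ k, hζ0, hζ1, mul_one]
    by_cases hk : k = j
    · subst hk
      rw [if_pos rfl, if_pos rfl, hwb]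
      have : v k + (t : ℂ) * v k = ((1 + t : ℝ) : ℂ) * v k := by
        push_cast; ring
      rw [this, norm_mul, Complex.norm_real, Real.norm_eq_abs,
        abs_of_pos (by linarith)]
      ring
    · rw [if_neg hk, if_neg hk, add_zero, add_zero]
  have hcζ : ‖c ζ‖ ^ 2 = N + D := by
    have h := lp.norm_rpow_eq_tsum (p := 2) (by norm_num) (c ζ)
    have h' : ‖c ζ‖ ^ 2 = ∑' k, ‖(c ζ : ∀ _ : ℕ, ℂ) k‖ ^ 2 := by
      simpa [ENNReal.toReal_ofNat, Real.rpow_natCast] using h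
    rw [h']
    calc ∑' k, ‖(c ζ : ∀ _ : ℕ, ℂ) k‖ ^ 2
        = ∑' k, (‖v k‖ ^ 2 + (if k = j then D else 0)) := by
          exact tsum_congr hentry
      _ = (∑' k, ‖v k‖ ^ 2) + ∑' k, (if k = j then D else 0) := by
          refine Summable.tsum_add hsummable ?_
          exact summable_of_ne_finset_zero (s := {j}) (by
            intro k hk
            simp only [Finset.mem_singleton] at hk
            simp [hk])
      _ = N + D := by rw [← hVnorm, hNdef, tsum_ite_eq]
  have hop : ‖c ζ‖ ≤ ‖V‖ * ‖ζ‖ := by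
    rw [← hnorm]; exact c.le_opNorm ζ
  have hsq : ‖c ζ‖ ^ 2 ≤ N * ‖ζ‖ ^ 2 := by
    rw [hNdef, ← mul_pow]
    exact pow_le_pow_left₀ (norm_nonneg _) hop 2
  rw [hcζ, hζnorm] at hsq
  have hb2 : ‖b‖ ^ 2 = t ^ 2 * ‖v j‖ ^ 2 / ‖w‖ ^ 2 := by
    rw [hbdef, norm_div, norm_mul, Complex.norm_real, Real.norm_eq_abs,
      abs_of_pos ht, div_pow, mul_pow]
  have hNt : N * t = ‖w‖ ^ 2 := by
    rw [htdef]; field_simp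
  have hNb : N * ‖b‖ ^ 2 = t * ‖v j‖ ^ 2 := by
    rw [hb2, ← hNt]
    field_simp
  have hvjpos : (0:ℝ) < ‖v j‖ := norm_pos_iff.2 (hvj j)
  nlinarith [hsq, hNb, mul_pos ht (mul_pos ht (pow_pos hvjpos 2))]
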